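/- Let 𝕜 be a field of characteristic p > 2, let m ≥ p be an integer, and let μ_1,…,μ_m ∈ ℕ. Consider in the fraction field of 𝕜[x_1,…,x_m] the element g := ∑_{σ ∈ S_m} ∏_{s=1}^{m} x_{σ(s)}^{μ_s} · ∏_{1≤i<j≤m} (x_{σ(i)} − x_{σ(j)} + 1)/(x_{σ(i)} − x_{σ(j)}). Then g is the image of a (unique) polynomial G ∈ 𝕜[x_1,…,x_m], and G vanishes under the substitution x_i ↦ x_1 − (i−1) for 2 ≤ i ≤ p (with x_1 and x_{p+1},…,x_m left unchanged); i.e. G(x_1, x_1−1, …, x_1−(p−1), x_{p+1}, …, x_m) = 0. -/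

import Mathlib

set_option maxHeartbeats 1000000
set_option synthInstance.maxHeartbeats 400000

open Finset MvPolynomial

section Aux

variable {𝕜 : Type*} [Field 𝕜] {m : ℕ}

/-- Sign-Vandermonde: permuting a difference product introduces the sign. -/
lemma perm_vdm_prod {R : Type*} [CommRing R] {n : ℕ} (v : Fin n → R) (σ : Equiv.Perm (Fin n)) :
    (∏ i : Fin n, ∏ j ∈ Finset.Ioi i, (v (σ i) - v (σ j)))
      = ((Equiv.Perm.sign σ : ℤ) : R) * ∏ i : Fin n, ∏ j ∈ Finset.Ioi i, (v i - v j) := by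
  have flip : ∀ u : Fin n → R, (∏ i : Fin n, ∏ j ∈ Finset.Ioi i, (u i - u j))
      = (∏ i : Fin n, ∏ j ∈ Finset.Ioi i, (-1 : R)) *
        ∏ i : Fin n, ∏ j ∈ Finset.Ioi i, (u j - u i) := by
    intro u
    rw [← Finset.prod_mul_distrib]
    refine Finset.prod_congr rfl fun i _ => ?_
    rw [← Finset.prod_mul_distrib]
    exact Finset.prod_congr rfl fun j _ => by ring
  have hsub : Matrix.vandermonde (v ∘ σ) = (Matrix.vandermonde v).submatrix σ id := by
    ext i j
    simp [Matrix.vandermonde_apply, Matrix.submatrix_apply]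
  have h1 : (∏ i : Fin n, ∏ j ∈ Finset.Ioi i, (v (σ j) - v (σ i)))
      = ((Equiv.Perm.sign σ : ℤ) : R) * ∏ i : Fin n, ∏ j ∈ Finset.Ioi i, (v j - v i) := by
    rw [← Matrix.det_vandermonde, ← Matrix.det_vandermonde v,
      show (Matrix.vandermonde fun j => v (σ j)) = Matrix.vandermonde (v ∘ σ) from rfl,
      hsub, Matrix.det_permute]
  rw [flip (fun i => v (σ i)), flip v, h1]
  ring

/-- Generic: if `d` divides `X i - w i` for all `i`, then `d ∣ f - aeval w f`. -/
lemma dvd_sub_aeval {R : Type*} [CommRing R] {n : Type*} (w : n → MvPolynomial n R)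
    (d : MvPolynomial n R) (h : ∀ i, d ∣ (X i - w i)) (f : MvPolynomial n R) :
    d ∣ f - aeval w f := by
  induction f using MvPolynomial.induction_on with
  | C a => simp
  | add f g hf hg =>
      have := dvd_add hf hg
      rw [map_add]
      convert this using 1
      ring
  | mul_X f i hf =>
      have key : f * X i - aeval w (f * X i)
          = (f - aeval w f) * X i + aeval w f * (X i - w i) := by
        rw [map_mul, aeval_X]; ring
      rw [key]
      exact dvd_add (hf.mul_right _) ((h i).mul_left _)

variable {𝕜 : Type*} [Field 𝕜] {m : ℕ}

/-- The substitution replacing `X a` by `X b`. -/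
noncomputable def repl (𝕜 : Type*) [Field 𝕜] {m : ℕ} (a b : Fin m) :
    MvPolynomial (Fin m) 𝕜 →ₐ[𝕜] MvPolynomial (Fin m) 𝕜 :=
  aeval (fun c => if c = a then X b else X c)

lemma repl_X_self (a b : Fin m) : repl 𝕜 a b (X a) = X b := by simp [repl]

lemma repl_X_of_ne (a b : Fin m) {c : Fin m} (hc : c ≠ a) : repl 𝕜 a b (X c) = X c := by
  simp [repl, hc]

lemma dvd_of_repl_eq_zero {a b : Fin m} (f : MvPolynomial (Fin m) 𝕜)
    (hf : repl 𝕜 a b f = 0) : (X a - X b : MvPolynomial (Fin m) 𝕜) ∣ f := by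
  have h := dvd_sub_aeval (fun c => if c = a then X b else X c) (X a - X b : MvPolynomial (Fin m) 𝕜)
    (fun i => by by_cases hi : i = a <;> simp [hi]) f
  rw [show aeval (fun c : Fin m => if c = a then X b else (X c : MvPolynomial (Fin m) 𝕜)) f
    = repl 𝕜 a b f from rfl, hf, sub_zero] at h
  exact h

lemma X_sub_X_ne_zero {a b : Fin m} (hab : a ≠ b) : (X a - X b : MvPolynomial (Fin m) 𝕜) ≠ 0 :=
  sub_ne_zero_of_ne (fun h => hab (X_injective h))

lemma repl_X_sub_X {a b c d : Fin m} (hab : a ≠ b) :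
    repl 𝕜 a b ((X c - X d : MvPolynomial (Fin m) 𝕜))
      = X (if c = a then b else c) - X (if d = a then b else d) := by
  by_cases hc : c = a <;> by_cases hd : d = a <;>
    simp [repl, hc, hd]

lemma prime_X_sub_X {a b : Fin m} (hab : a ≠ b) :
    Prime (X a - X b : MvPolynomial (Fin m) 𝕜) := by
  rw [← Ideal.span_singleton_prime (X_sub_X_ne_zero hab)]
  have hker : Ideal.span {(X a - X b : MvPolynomial (Fin m) 𝕜)}
      = RingHom.ker (repl 𝕜 a b).toRingHom := by
    apply le_antisymm
    · rw [Ideal.span_le]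
      intro x hx
      rw [Set.mem_singleton_iff] at hx
      subst hx
      simp [RingHom.mem_ker, repl_X_self, repl_X_of_ne a b hab.symm, map_sub]
    · intro x hx
      rw [RingHom.mem_ker] at hx
      exact Ideal.mem_span_singleton.2 (dvd_of_repl_eq_zero x hx)
  rw [hker]
  exact RingHom.ker_isPrime _

lemma X_sub_X_dvd_iff {a b c d : Fin m} (hab : a < b) (hcd : c < d)
    (h : (X a - X b : MvPolynomial (Fin m) 𝕜) ∣ (X c - X d)) : a = c ∧ b = d := by
  have h0 : repl 𝕜 a b ((X c - X d : MvPolynomial (Fin m) 𝕜)) = 0 := by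
    have : repl 𝕜 a b ((X a - X b : MvPolynomial (Fin m) 𝕜)) = 0 := by
      simp [map_sub, repl_X_self, repl_X_of_ne a b hab.ne']
    obtain ⟨e, he⟩ := h
    rw [he, map_mul, this, zero_mul]
  rw [repl_X_sub_X hab.ne] at h0
  have h1 : (if c = a then b else c) = (if d = a then b else d) :=
    X_injective (R := 𝕜) (sub_eq_zero.mp h0)
  by_cases hc : c = a <;> by_cases hd : d = a
  · exact absurd (hc.trans hd.symm) hcd.ne
  · simp [hc, hd] at h1
    exact ⟨hc.symm, h1⟩
  · simp [hc, hd] at h1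
    exact absurd (show b < a from h1 ▸ hd ▸ hcd) (lt_asymm hab)
  · simp [hc, hd] at h1
    exact absurd h1 hcd.ne

lemma double_prod_eq_filter {M : Type*} [CommMonoid M] (f : Fin m → Fin m → M) :
    (∏ i : Fin m, ∏ j ∈ Finset.Ioi i, f i j)
      = ∏ q ∈ Finset.univ.filter (fun q : Fin m × Fin m => q.1 < q.2), f q.1 q.2 := by
  rw [Finset.prod_sigma']
  refine Finset.prod_nbij' (fun x => (x.1, x.2)) (fun q => ⟨q.1, q.2⟩) ?_ ?_ ?_ ?_ ?_
  · rintro ⟨i, j⟩ hij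
    simp only [Finset.mem_sigma, Finset.mem_univ, Finset.mem_Ioi, true_and] at hij
    simp [hij]
  · rintro ⟨i, j⟩ hij
    simp only [Finset.mem_filter, Finset.mem_univ, true_and] at hij
    simp [hij]
  · rintro ⟨i, j⟩ _; rfl
  · rintro ⟨i, j⟩ _; rfl
  · rintro ⟨i, j⟩ _; rfl

lemma prod_X_sub_X_dvd (hX : ∀ (a b c d : Fin m), a < b → c < d →
      ((X a - X b : MvPolynomial (Fin m) 𝕜) ∣ (X c - X d)) → a = c ∧ b = d)
    (hP : ∀ (a b : Fin m), a < b → Prime (X a - X b : MvPolynomial (Fin m) 𝕜))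
    (N : MvPolynomial (Fin m) 𝕜)
    (hN : ∀ a b : Fin m, a < b → (X a - X b : MvPolynomial (Fin m) 𝕜) ∣ N) :
    (∏ q ∈ Finset.univ.filter (fun q : Fin m × Fin m => q.1 < q.2),
      (X q.1 - X q.2 : MvPolynomial (Fin m) 𝕜)) ∣ N := by
  classical
  have key : ∀ s : Finset (Fin m × Fin m),
      s ⊆ Finset.univ.filter (fun q : Fin m × Fin m => q.1 < q.2) →
      (∏ q ∈ s, (X q.1 - X q.2 : MvPolynomial (Fin m) 𝕜)) ∣ N := by
    intro s
    induction s using Finset.induction_on with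
    | empty => intro _; simp
    | insert q t hq ih =>
        intro hsub
        have hqlt : q.1 < q.2 := by
          have := hsub (Finset.mem_insert_self q t)
          simpa using this
        have htsub : t ⊆ Finset.univ.filter (fun q : Fin m × Fin m => q.1 < q.2) :=
          fun x hx => hsub (Finset.mem_insert_of_mem hx)
        obtain ⟨M, hM⟩ := ih htsub
        have hprime := hP q.1 q.2 hqlt
        have hdvdN : (X q.1 - X q.2 : MvPolynomial (Fin m) 𝕜) ∣
            (∏ r ∈ t, (X r.1 - X r.2 : MvPolynomial (Fin m) 𝕜)) * M :=
          hM ▸ hN q.1 q.2 hqlt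
        have hnot : ¬ (X q.1 - X q.2 : MvPolynomial (Fin m) 𝕜) ∣
            ∏ r ∈ t, (X r.1 - X r.2 : MvPolynomial (Fin m) 𝕜) := by
          intro hdvd
          obtain ⟨r, hrt, hrdvd⟩ := hprime.exists_mem_finset_dvd hdvd
          have hrlt : r.1 < r.2 := by
            have := htsub hrt
            simpa using this
          obtain ⟨h1, h2⟩ := hX q.1 q.2 r.1 r.2 hqlt hrlt hrdvd
          exact hq (by rwa [show q = r from Prod.ext h1 h2])
        have hdvdM : (X q.1 - X q.2 : MvPolynomial (Fin m) 𝕜) ∣ M :=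
          (hprime.dvd_mul.mp hdvdN).resolve_left hnot
        obtain ⟨M', hM'⟩ := hdvdM
        refine ⟨M', ?_⟩
        rw [Finset.prod_insert hq, hM, hM']
        ring
  exact key _ (le_refl _)

lemma repl_N_eq_zero (p : ℕ) [CharP 𝕜 p] (hp : 2 < p) (μ : Fin m → ℕ)
    {a b : Fin m} (hab : a ≠ b) :
    repl 𝕜 a b (∑ σ : Equiv.Perm (Fin m),
      ((Equiv.Perm.sign σ : ℤ) : MvPolynomial (Fin m) 𝕜) *
        ((∏ s : Fin m, X (σ s) ^ μ s) *
          ∏ i : Fin m, ∏ j ∈ Finset.Ioi i, (X (σ i) - X (σ j) + 1))) = 0 := by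
  classical
  set R := MvPolynomial (Fin m) 𝕜
  set τ : Equiv.Perm (Fin m) := Equiv.swap a b with hτ
  set B : Equiv.Perm (Fin m) → R := fun σ =>
    (∏ s : Fin m, X (σ s) ^ μ s) *
      ∏ i : Fin m, ∏ j ∈ Finset.Ioi i, (X (σ i) - X (σ j) + 1) with hB
  set Nt : Equiv.Perm (Fin m) → R := fun σ => ((Equiv.Perm.sign σ : ℤ) : R) * B σ with hNt
  have keyB : ∀ σ : Equiv.Perm (Fin m), B (τ * σ) = rename τ (B σ) := by
    intro σ
    rw [hB]
    simp only [map_mul, map_prod, map_pow, map_sub, map_add, map_one, rename_X]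
    rfl
  have keyrepl : ∀ f : R, repl 𝕜 a b (rename τ f) = repl 𝕜 a b f := by
    intro f
    rw [repl, aeval_rename]
    have hfun : ((fun c => if c = a then X b else X c) ∘ ⇑τ)
        = (fun c : Fin m => if c = a then (X b : MvPolynomial (Fin m) 𝕜) else X c) := by
      funext c
      simp only [Function.comp_apply]
      rcases eq_or_ne c a with hc | hc
      · subst hc
        simp [hτ, Equiv.swap_apply_left, hab.symm]
      · rcases eq_or_ne c b with hcb | hcb
        · subst hcb
          simp [hτ, Equiv.swap_apply_right, hc]
        · simp [hτ, Equiv.swap_apply_of_ne_of_ne hc hcb, hc]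
    rw [hfun]
  have keysgn : ∀ σ : Equiv.Perm (Fin m),
      ((Equiv.Perm.sign (τ * σ) : ℤ) : R) = -((Equiv.Perm.sign σ : ℤ) : R) := by
    intro σ
    rw [map_mul, Equiv.Perm.sign_swap hab]
    push_cast
    ring
  set S : R := ∑ σ : Equiv.Perm (Fin m), repl 𝕜 a b (Nt σ) with hS
  have hre : S = ∑ σ : Equiv.Perm (Fin m), repl 𝕜 a b (Nt (τ * σ)) := by
    rw [hS]
    exact (Equiv.sum_comp (Equiv.mulLeft τ) (fun σ => repl 𝕜 a b (Nt σ))).symm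
  have hneg : ∀ σ : Equiv.Perm (Fin m), repl 𝕜 a b (Nt (τ * σ)) = -repl 𝕜 a b (Nt σ) := by
    intro σ
    have e1 : Nt (τ * σ) = -(((Equiv.Perm.sign σ : ℤ) : R) * rename τ (B σ)) := by
      rw [hNt]
      simp only []
      rw [keyB, show ((Equiv.Perm.sign (τ * σ) : ℤ) : R) = -((Equiv.Perm.sign σ : ℤ) : R) from
        keysgn σ]
      ring
    rw [e1, map_neg]
    have e2 : repl 𝕜 a b (((Equiv.Perm.sign σ : ℤ) : R) * rename τ (B σ))
        = ((Equiv.Perm.sign σ : ℤ) : R) * repl 𝕜 a b (B σ) := by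
      rw [map_mul, map_intCast, keyrepl]
    rw [e2]
    have e3 : repl 𝕜 a b (Nt σ) = ((Equiv.Perm.sign σ : ℤ) : R) * repl 𝕜 a b (B σ) := by
      rw [hNt]
      simp only []
      rw [map_mul, map_intCast]
    rw [e3]
  have hSS : S + S = 0 := by
    nth_rewrite 2 [hre]
    rw [← Finset.sum_add_distrib]
    refine Finset.sum_eq_zero fun σ _ => ?_
    rw [hneg σ]
    ring
  have h2 : (2 : R) ≠ 0 := by
    have h2k : ((2 : ℕ) : 𝕜) ≠ 0 := by
      rw [Ne, CharP.cast_eq_zero_iff 𝕜 p 2]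
      intro hdvd
      exact absurd (Nat.le_of_dvd (by norm_num) hdvd) (by omega)
    intro h
    apply h2k
    have h' : ((2 : ℕ) : R) = 0 := by exact_mod_cast h
    rw [show ((2 : ℕ) : R) = C ((2 : ℕ) : 𝕜) from by push_cast; rfl] at h'
    exact (MvPolynomial.C_eq_zero).mp h'
  have hS0 : S = 0 := by
    have h2S : (2 : R) * S = 0 := by rw [two_mul]; exact hSS
    rcases mul_eq_zero.mp h2S with h | h
    · exact absurd h h2
    · exact h
  have final : ∑ σ : Equiv.Perm (Fin m), repl 𝕜 a b (Nt σ) = 0 := hS0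
  exact (map_sum (repl 𝕜 a b) Nt Finset.univ).trans final

lemma X_sub_C_sub_X_ne_zero {u v : Fin m} (huv : u ≠ v) (c : 𝕜) :
    (X u - C c - X v : MvPolynomial (Fin m) 𝕜) ≠ 0 := by
  intro h
  have hc := congrArg (coeff (Finsupp.single v 1)) h
  rw [coeff_sub, coeff_sub, coeff_X, coeff_C] at hc
  rw [if_neg (by
    intro h0
    exact huv ((Finsupp.single_left_inj one_ne_zero).mp h0))] at hc
  rw [if_neg (by
    intro h0
    exact one_ne_zero (Finsupp.single_eq_zero.mp h0.symm))] at hc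
  simp at hc

lemma castmod (p : ℕ) [CharP 𝕜 p] (hp : 0 < p) (n : ℕ) : ((n % p : ℕ) : 𝕜) = (n : 𝕜) := by
  conv_rhs => rw [← Nat.div_add_mod n p]
  push_cast
  rw [CharP.cast_eq_zero 𝕜 p]
  ring

/-- The wheel substitution. -/
noncomputable def wheel (𝕜 : Type*) [Field 𝕜] {m : ℕ} (p : ℕ) (h0 : 0 < m) :
    Fin m → MvPolynomial (Fin m) 𝕜 := fun i =>
  if (i : ℕ) < p then X (⟨0, h0⟩ : Fin m) - ((i : ℕ) : MvPolynomial (Fin m) 𝕜) else X i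

lemma wheel_den_ne_zero (p : ℕ) [CharP 𝕜 p] (hp : 2 < p) (hm : p ≤ m) (h0 : 0 < m) :
    aeval (wheel 𝕜 p h0) (∏ i : Fin m, ∏ j ∈ Finset.Ioi i, (X i - X j : MvPolynomial (Fin m) 𝕜))
      ≠ 0 := by
  rw [map_prod]
  refine Finset.prod_ne_zero_iff.2 fun i _ => ?_
  rw [map_prod]
  refine Finset.prod_ne_zero_iff.2 fun j hj => ?_
  have hij : i < j := Finset.mem_Ioi.mp hj
  have hijn : (i : ℕ) < (j : ℕ) := hij
  rw [map_sub, aeval_X, aeval_X]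
  by_cases hi : (i : ℕ) < p
  · by_cases hjp : (j : ℕ) < p
    · simp only [wheel]
      rw [if_pos hi, if_pos hjp]
      have : (X (⟨0, h0⟩ : Fin m) - ((i : ℕ) : MvPolynomial (Fin m) 𝕜))
          - (X (⟨0, h0⟩ : Fin m) - ((j : ℕ) : MvPolynomial (Fin m) 𝕜))
          = C ((((j : ℕ) - (i : ℕ) : ℕ)) : 𝕜) := by
        rw [Nat.cast_sub hijn.le]
        push_cast
        rw [map_sub, map_natCast (C : 𝕜 →+* MvPolynomial (Fin m) 𝕜),
          map_natCast (C : 𝕜 →+* MvPolynomial (Fin m) 𝕜)]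
        ring
      rw [this]
      intro hC
      rw [MvPolynomial.C_eq_zero, CharP.cast_eq_zero_iff 𝕜 p] at hC
      rename_i hdvd2
      have hdvd := hC
      have := Nat.le_of_dvd (by omega) hdvd
      omega
    · simp only [wheel]
      rw [if_pos hi, if_neg hjp]
      have hj0 : j ≠ (⟨0, h0⟩ : Fin m) := by
        intro h
        rw [h] at hjp
        exact hjp (by simpa using by omega)
      have : (X (⟨0, h0⟩ : Fin m) - ((i : ℕ) : MvPolynomial (Fin m) 𝕜)) - X j
          = X (⟨0, h0⟩ : Fin m) - C (((i : ℕ) : 𝕜)) - X j := by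
        rw [map_natCast (C : 𝕜 →+* MvPolynomial (Fin m) 𝕜)]
      rw [this]
      exact X_sub_C_sub_X_ne_zero (Ne.symm hj0) _
  · have hjp : ¬ (j : ℕ) < p := by omega
    simp only [wheel]
    rw [if_neg hi, if_neg hjp]
    exact sub_ne_zero_of_ne (fun h => hij.ne (X_injective h))

lemma wheel_num_eq_zero (p : ℕ) [CharP 𝕜 p] (hp : 2 < p) (hm : p ≤ m) (h0 : 0 < m)
    (σ : Equiv.Perm (Fin m)) :
    aeval (wheel 𝕜 p h0) (∏ i : Fin m, ∏ j ∈ Finset.Ioi i,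
      (X (σ i) - X (σ j) + 1 : MvPolynomial (Fin m) 𝕜)) = 0 := by
  classical
  set t : Finset (Fin m) := Finset.univ.filter (fun c => ((σ c : Fin m) : ℕ) < p) with ht
  have htne : t.Nonempty := by
    refine ⟨σ⁻¹ ⟨0, by omega⟩, ?_⟩
    rw [ht]
    simp [Equiv.Perm.inv_def, Equiv.apply_symm_apply]
    omega
  set j : Fin m := t.max' htne with hj
  have hjt : j ∈ t := t.max'_mem htne
  have haval : ((σ j : Fin m) : ℕ) < p := by
    rw [ht] at hjt
    simpa using hjt
  set a : ℕ := ((σ j : Fin m) : ℕ) with hadef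
  set bn : ℕ := (a + 1) % p with hbn
  have hbnp : bn < p := Nat.mod_lt _ (by omega)
  set b : Fin m := ⟨bn, by omega⟩ with hb
  set i : Fin m := σ⁻¹ b with hi
  have hit : i ∈ t := by
    rw [ht]
    simp [hi, Equiv.Perm.inv_def, Equiv.apply_symm_apply, hb]
    omega
  have hile : i ≤ j := Finset.le_max' t i hit
  have hbna : bn ≠ a := by
    rw [hbn]
    rcases Nat.lt_or_ge (a + 1) p with h | h
    · rw [Nat.mod_eq_of_lt h]; omega
    · have : a + 1 = p := by omega
      rw [this, Nat.mod_self]; omega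
  have hine : i ≠ j := by
    intro h
    apply hbna
    have : σ i = σ j := by rw [h]
    rw [hi, Equiv.Perm.inv_def, Equiv.apply_symm_apply] at this
    have : (b : ℕ) = (σ j : ℕ) := by rw [this]
    simpa [hb] using this
  have hij : i < j := lt_of_le_of_ne hile hine
  rw [map_prod]
  refine Finset.prod_eq_zero (Finset.mem_univ i) ?_
  rw [map_prod]
  refine Finset.prod_eq_zero (Finset.mem_Ioi.mpr hij) ?_
  have hσi : σ i = b := by rw [hi, Equiv.Perm.inv_def, Equiv.apply_symm_apply]
  rw [map_add, map_sub, aeval_X, aeval_X, map_one, hσi]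
  simp only [wheel]
  rw [if_pos (show ((b : Fin m) : ℕ) < p by simpa [hb] using hbnp),
    if_pos (show ((σ j : Fin m) : ℕ) < p from haval)]
  have hcast : ((bn : ℕ) : 𝕜) = (a : 𝕜) + 1 := by
    rw [hbn, castmod p (by omega) (a + 1)]
    push_cast
    ring
  have : (X (⟨0, h0⟩ : Fin m) - (((b : Fin m) : ℕ) : MvPolynomial (Fin m) 𝕜))
      - (X (⟨0, h0⟩ : Fin m) - (((σ j : Fin m) : ℕ) : MvPolynomial (Fin m) 𝕜)) + 1
      = C ((a : 𝕜) - ((bn : ℕ) : 𝕜) + 1) := by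
    have hbv : ((b : Fin m) : ℕ) = bn := by rw [hb]
    rw [hbv, ← hadef]
    push_cast
    rw [map_add, map_sub, map_natCast (C : 𝕜 →+* MvPolynomial (Fin m) 𝕜),
      map_natCast (C : 𝕜 →+* MvPolynomial (Fin m) 𝕜), map_one]
    ring
  rw [this, hcast]
  rw [show (a : 𝕜) - ((a : 𝕜) + 1) + 1 = 0 by ring, map_zero]

end Aux

/-- The variable `x_i` viewed inside the fraction field of `𝕜[x_1, …, x_m]`. -/
noncomputable def Xk (𝕜 : Type*) [Field 𝕜] (m : ℕ) (i : Fin m) :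
    FractionRing (MvPolynomial (Fin m) 𝕜) :=
  algebraMap (MvPolynomial (Fin m) 𝕜) (FractionRing (MvPolynomial (Fin m) 𝕜)) (MvPolynomial.X i)

section Aux2
variable {𝕜 : Type*} [Field 𝕜] {m : ℕ}

lemma term_mul_D (μ : Fin m → ℕ) (σ : Equiv.Perm (Fin m)) :
    ((∏ s : Fin m, Xk 𝕜 m (σ s) ^ μ s) *
        ∏ i : Fin m, ∏ j ∈ Finset.Ioi i,
          (Xk 𝕜 m (σ i) - Xk 𝕜 m (σ j) + 1) / (Xk 𝕜 m (σ i) - Xk 𝕜 m (σ j))) *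
      algebraMap (MvPolynomial (Fin m) 𝕜) (FractionRing (MvPolynomial (Fin m) 𝕜))
        (∏ i : Fin m, ∏ j ∈ Finset.Ioi i, (X i - X j))
    = algebraMap (MvPolynomial (Fin m) 𝕜) (FractionRing (MvPolynomial (Fin m) 𝕜))
        (((Equiv.Perm.sign σ : ℤ) : MvPolynomial (Fin m) 𝕜) *
          ((∏ s : Fin m, X (σ s) ^ μ s) *
            ∏ i : Fin m, ∏ j ∈ Finset.Ioi i, (X (σ i) - X (σ j) + 1))) := by
  classical
  set R := MvPolynomial (Fin m) 𝕜
  set K := FractionRing R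
  set ι := algebraMap R K with hι
  have hinj : Function.Injective ι := IsFractionRing.injective R K
  have hne : ∀ r : R, r ≠ 0 → ι r ≠ 0 := fun r hr h0 => hr (hinj (by simpa using h0))
  set D : R := ∏ i : Fin m, ∏ j ∈ Finset.Ioi i, (X i - X j) with hD
  set Dσ : R := ∏ i : Fin m, ∏ j ∈ Finset.Ioi i, (X (σ i) - X (σ j)) with hDσdef
  have hD0 : D ≠ 0 := by
    rw [hD]
    refine Finset.prod_ne_zero_iff.2 fun i _ => Finset.prod_ne_zero_iff.2 fun j hj => ?_
    exact X_sub_X_ne_zero (Finset.mem_Ioi.mp hj).ne'.symm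
  have hDσ0 : Dσ ≠ 0 := by
    rw [hDσdef]
    refine Finset.prod_ne_zero_iff.2 fun i _ => Finset.prod_ne_zero_iff.2 fun j hj => ?_
    exact X_sub_X_ne_zero (fun h => ((Finset.mem_Ioi.mp hj).ne'.symm) (σ.injective h))
  -- the double product of quotients
  have hquot : (∏ i : Fin m, ∏ j ∈ Finset.Ioi i,
      (Xk 𝕜 m (σ i) - Xk 𝕜 m (σ j) + 1) / (Xk 𝕜 m (σ i) - Xk 𝕜 m (σ j)))
      = ι (∏ i : Fin m, ∏ j ∈ Finset.Ioi i, (X (σ i) - X (σ j) + 1)) / ι Dσ := by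
    rw [map_prod, map_prod]
    rw [← Finset.prod_div_distrib]
    refine Finset.prod_congr rfl fun i _ => ?_
    rw [map_prod, map_prod, ← Finset.prod_div_distrib]
    refine Finset.prod_congr rfl fun j _ => ?_
    have e1 : Xk 𝕜 m (σ i) - Xk 𝕜 m (σ j) + 1 = ι (X (σ i) - X (σ j) + 1) := by
      rw [map_add, map_sub, map_one]; rfl
    have e2 : Xk 𝕜 m (σ i) - Xk 𝕜 m (σ j) = ι (X (σ i) - X (σ j)) := by
      rw [map_sub]; rfl
    rw [e1, e2]
  have hP : (∏ s : Fin m, Xk 𝕜 m (σ s) ^ μ s) = ι (∏ s : Fin m, X (σ s) ^ μ s) := by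
    rw [map_prod]
    exact Finset.prod_congr rfl fun s _ => by rw [map_pow]; rfl
  have hsgn : Dσ = ((Equiv.Perm.sign σ : ℤ) : R) * D := perm_vdm_prod X σ
  have hs2 : ((Equiv.Perm.sign σ : ℤ) : K) * ((Equiv.Perm.sign σ : ℤ) : K) = 1 := by
    have h : ((Equiv.Perm.sign σ : ℤ)) * ((Equiv.Perm.sign σ : ℤ)) = 1 := by
      rcases Int.units_eq_one_or (Equiv.Perm.sign σ) with h | h <;> rw [h] <;> rfl
    rw [← Int.cast_mul, h, Int.cast_one]
  have hιD0 : ι D ≠ 0 := hne D hD0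
  have hcast : ι ((Equiv.Perm.sign σ : ℤ) : R) = ((Equiv.Perm.sign σ : ℤ) : K) := map_intCast ι _
  have hsinv : ((Equiv.Perm.sign σ : ℤ) : K)⁻¹ = ((Equiv.Perm.sign σ : ℤ) : K) :=
    inv_eq_of_mul_eq_one_right hs2
  have hDσeq : ι Dσ = ((Equiv.Perm.sign σ : ℤ) : K) * ι D := by
    rw [hsgn, map_mul, hcast]
  rw [hquot, hP]
  set s' : K := ((Equiv.Perm.sign σ : ℤ) : K)
  set P' : K := ι (∏ s : Fin m, X (σ s) ^ μ s)
  set A' : K := ι (∏ i : Fin m, ∏ j ∈ Finset.Ioi i, (X (σ i) - X (σ j) + 1))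
  calc P' * (A' / ι Dσ) * ι D = (P' * A' * ι D) * (ι Dσ)⁻¹ := by
        rw [div_eq_mul_inv]; ring
    _ = (P' * A' * ι D) * (s'⁻¹ * (ι D)⁻¹) := by rw [hDσeq, mul_inv]
    _ = s' * (P' * A') * (ι D * (ι D)⁻¹) := by rw [hsinv]; ring
    _ = s' * (P' * A') := by rw [mul_inv_cancel₀ hιD0, mul_one]
    _ = _ := by rw [map_mul, map_mul, hcast]

end Aux2

/-- let `𝕜` have characteristic `p > 2`, `m ≥ p`, and `μ_1,…,μ_m ∈ ℕ`. The
element `g = ∑_{σ ∈ S_m} ∏_s x_{σ(s)}^{μ_s} ∏_{i<j} (x_{σ(i)}−x_{σ(j)}+1)/(x_{σ(i)}−x_{σ(j)})`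
of the fraction field of `𝕜[x_1,…,x_m]` is the image of a unique polynomial `G`, and `G`
vanishes under the substitution `x_i ↦ x_1 − (i−1)` for `2 ≤ i ≤ p` (the wheel condition
`x_1 = x_2 + 1 = ⋯ = x_p + (p−1)` of characteristic `p`). -/
theorem stmt_7 (𝕜 : Type*) [Field 𝕜] (p : ℕ) [CharP 𝕜 p] (hp : 2 < p)
    (m : ℕ) (hm : p ≤ m) (μ : Fin m → ℕ) :
    ∃! G : MvPolynomial (Fin m) 𝕜,
      algebraMap (MvPolynomial (Fin m) 𝕜) (FractionRing (MvPolynomial (Fin m) 𝕜)) G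
        = ∑ σ : Equiv.Perm (Fin m),
            (∏ s : Fin m, Xk 𝕜 m (σ s) ^ μ s) *
              ∏ i : Fin m, ∏ j ∈ Finset.Ioi i,
                (Xk 𝕜 m (σ i) - Xk 𝕜 m (σ j) + 1) / (Xk 𝕜 m (σ i) - Xk 𝕜 m (σ j))
      ∧ MvPolynomial.aeval (fun i : Fin m =>
            if (i : ℕ) < p then
              MvPolynomial.X (⟨0, by omega⟩ : Fin m) - ((i : ℕ) : MvPolynomial (Fin m) 𝕜)
            else MvPolynomial.X i) G = 0 := by
  classical
  have h0 : 0 < m := by omega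
  set ι := algebraMap (MvPolynomial (Fin m) 𝕜) (FractionRing (MvPolynomial (Fin m) 𝕜)) with hι
  have hinj : Function.Injective ι :=
    IsFractionRing.injective (MvPolynomial (Fin m) 𝕜) (FractionRing (MvPolynomial (Fin m) 𝕜))
  set D : MvPolynomial (Fin m) 𝕜 := ∏ i : Fin m, ∏ j ∈ Finset.Ioi i, (X i - X j) with hD
  set N : MvPolynomial (Fin m) 𝕜 := ∑ σ : Equiv.Perm (Fin m),
      ((Equiv.Perm.sign σ : ℤ) : MvPolynomial (Fin m) 𝕜) *
        ((∏ s : Fin m, X (σ s) ^ μ s) *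
          ∏ i : Fin m, ∏ j ∈ Finset.Ioi i, (X (σ i) - X (σ j) + 1)) with hN
  have hD0 : D ≠ 0 := by
    rw [hD]
    refine Finset.prod_ne_zero_iff.2 fun i _ => Finset.prod_ne_zero_iff.2 fun j hj => ?_
    exact X_sub_X_ne_zero (Finset.mem_Ioi.mp hj).ne'.symm
  have hιD0 : ι D ≠ 0 := fun h => hD0 (hinj (by simpa using h))
  -- divisibility
  have hdvd : ∀ a b : Fin m, a < b → (X a - X b : MvPolynomial (Fin m) 𝕜) ∣ N := by
    intro a b hab
    exact dvd_of_repl_eq_zero N (repl_N_eq_zero p hp μ hab.ne)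
  have hDdvd : D ∣ N := by
    rw [hD, double_prod_eq_filter]
    exact prod_X_sub_X_dvd (fun a b c d hab hcd h => X_sub_X_dvd_iff hab hcd h)
      (fun a b h => prime_X_sub_X h.ne) N hdvd
  obtain ⟨G, hG⟩ := hDdvd
  -- the sum equals ι G
  have hsum : (∑ σ : Equiv.Perm (Fin m),
      (∏ s : Fin m, Xk 𝕜 m (σ s) ^ μ s) *
        ∏ i : Fin m, ∏ j ∈ Finset.Ioi i,
          (Xk 𝕜 m (σ i) - Xk 𝕜 m (σ j) + 1) / (Xk 𝕜 m (σ i) - Xk 𝕜 m (σ j))) * ι D = ι N := by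
    rw [Finset.sum_mul, hN, map_sum]
    exact Finset.sum_congr rfl fun σ _ => term_mul_D μ σ
  have hg : ι G = ∑ σ : Equiv.Perm (Fin m),
      (∏ s : Fin m, Xk 𝕜 m (σ s) ^ μ s) *
        ∏ i : Fin m, ∏ j ∈ Finset.Ioi i,
          (Xk 𝕜 m (σ i) - Xk 𝕜 m (σ j) + 1) / (Xk 𝕜 m (σ i) - Xk 𝕜 m (σ j)) := by
    refine (mul_right_cancel₀ hιD0 ?_).symm
    rw [hsum, hG, map_mul]
    ring
  -- wheel condition
  have hwheel : MvPolynomial.aeval (fun i : Fin m =>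
      if (i : ℕ) < p then
        MvPolynomial.X (⟨0, by omega⟩ : Fin m) - ((i : ℕ) : MvPolynomial (Fin m) 𝕜)
      else MvPolynomial.X i) G = 0 := by
    have hφ : (fun i : Fin m =>
        if (i : ℕ) < p then
          MvPolynomial.X (⟨0, by omega⟩ : Fin m) - ((i : ℕ) : MvPolynomial (Fin m) 𝕜)
        else MvPolynomial.X i) = wheel 𝕜 p h0 := rfl
    rw [hφ]
    have hNzero : aeval (wheel 𝕜 p h0) N = 0 := by
      rw [hN, map_sum]
      refine Finset.sum_eq_zero fun σ _ => ?_
      rw [map_mul, map_mul, wheel_num_eq_zero p hp hm h0 σ, mul_zero, mul_zero]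
    have hprod : aeval (wheel 𝕜 p h0) D * aeval (wheel 𝕜 p h0) G = 0 := by
      rw [← map_mul, ← hG, hNzero]
    rcases mul_eq_zero.mp hprod with h | h
    · exact absurd h (wheel_den_ne_zero p hp hm h0)
    · exact h
  refine ⟨G, ⟨hg, hwheel⟩, ?_⟩
  rintro G' ⟨hG', -⟩
  exact hinj (hG'.trans hg.symm)
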